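/- In the best-response redistribution dynamics, the potential Φ(δ_1,…,δ_n) := ∑_i ∑_{x∈A_i} δ_i(x)·log(v_{i,x}/δ(x)) strictly increases after a single elementary transfer: if an agent i transfers ε > 0 from charity x to charity y where δ(x)/v_{i,x} > δ(y)/v_{i,y} and (δ(x)−ε)/v_{i,x} ≥ (δ(y)+ε)/v_{i,y} (and δ_i(x) ≥ ε), then Φ after the transfer is strictly greater than Φ before. -/

import Mathlib

open Finset

/-- The potential function `Φ(δ_1,…,δ_n) = ∑_i ∑_{x ∈ A_i} δ_i(x) log(v_{i,x}/δ(x))`. -/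
noncomputable def potential {N A : Type*} [Fintype N] [Fintype A]
    (v : N → A → ℝ) (δi : N → A → ℝ) : ℝ :=
  ∑ i, ∑ x ∈ Finset.univ.filter (fun x => 0 < v i x),
    δi i x * Real.log (v i x / ∑ j, δi j x)

lemma aux_G {N A : Type*} [Fintype N] (v d : N → A → ℝ) (a : A)
    (h0 : ∀ i, ¬ 0 < v i a → d i a = 0) (hD : 0 < ∑ j, d j a) :
    (∑ i, if 0 < v i a then d i a * Real.log (v i a / ∑ j, d j a) else 0)
      = (∑ i, if 0 < v i a then d i a * Real.log (v i a) else 0)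
        - (∑ j, d j a) * Real.log (∑ j, d j a) := by
  have h : ∀ i ∈ Finset.univ, (if 0 < v i a then d i a * Real.log (v i a / ∑ j, d j a) else 0)
      = (if 0 < v i a then d i a * Real.log (v i a) else 0) - d i a * Real.log (∑ j, d j a) := by
    intro i _
    by_cases h : 0 < v i a
    · simp only [h, if_true]
      rw [Real.log_div h.ne' hD.ne']
      ring
    · simp [h, h0 i h]
  rw [Finset.sum_congr rfl h, Finset.sum_sub_distrib, ← Finset.sum_mul]

lemma aux_ineq (a b p q ε : ℝ) (hp : 0 < p) (hq : 0 < q) (ha : 0 < a) (hb : 0 < b)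
    (hε : 0 < ε) (haε : 0 < a - ε) (hr : (b + ε) / q ≤ (a - ε) / p) :
    0 < -(ε * Real.log p) + ε * Real.log q + a * Real.log a - (a - ε) * Real.log (a - ε)
        + b * Real.log b - (b + ε) * Real.log (b + ε) := by
  have hbε : 0 < b + ε := by linarith
  have h1 : Real.log (a - ε) - Real.log a < -(ε / a) := by
    have h := Real.log_lt_sub_one_of_pos (show (0:ℝ) < (a - ε)/a by positivity)
      (by intro h; rw [div_eq_one_iff_eq ha.ne'] at h; linarith)
    rw [Real.log_div haε.ne' ha.ne'] at h
    have e1 : (a - ε)/a - 1 = -(ε/a) := by field_simp; ring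
    linarith [e1 ▸ h]
  have h1' : ε < a * (Real.log a - Real.log (a - ε)) := by
    have : ε / a < Real.log a - Real.log (a - ε) := by linarith
    calc ε = a * (ε / a) := by field_simp
    _ < a * (Real.log a - Real.log (a - ε)) := by exact (mul_lt_mul_iff_right₀ ha).mpr this
  have h2 : Real.log (b + ε) - Real.log b < ε / b := by
    have h := Real.log_lt_sub_one_of_pos (show (0:ℝ) < (b + ε)/b by positivity)
      (by intro h; rw [div_eq_one_iff_eq hb.ne'] at h; linarith)
    rw [Real.log_div hbε.ne' hb.ne'] at h
    have e1 : (b + ε)/b - 1 = ε/b := by field_simp; ring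
    linarith [e1 ▸ h]
  have h2' : -ε < b * (Real.log b - Real.log (b + ε)) := by
    have : Real.log b - Real.log (b + ε) > -(ε / b) := by linarith
    have := (mul_lt_mul_iff_right₀ hb).mpr this
    rw [mul_neg] at this
    have e : b * (ε / b) = ε := by field_simp
    linarith [e ▸ this]
  have h3 : Real.log (b + ε) - Real.log q ≤ Real.log (a - ε) - Real.log p := by
    have := Real.log_le_log (by positivity) hr
    rwa [Real.log_div hbε.ne' hq.ne', Real.log_div haε.ne' hp.ne'] at this
  have h3' : ε * (Real.log (b + ε) - Real.log q) ≤ ε * (Real.log (a - ε) - Real.log p) :=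
    (mul_le_mul_iff_right₀ hε).mpr h3
  nlinarith [h1', h2', h3']

theorem stmt_18 {N A : Type*} [Fintype N] [DecidableEq N] [Fintype A] [DecidableEq A]
    (v : N → A → ℝ) (hv : ∀ i x, 0 ≤ v i x)
    (δi : N → A → ℝ) (hδi : ∀ i x, 0 ≤ δi i x)
    (hsupp : ∀ i x, 0 < δi i x → 0 < v i x)
    (i₀ : N) (x y : A) (hvx : 0 < v i₀ x) (hvy : 0 < v i₀ y)
    (hδx : 0 < ∑ j, δi j x) (hδy : 0 < ∑ j, δi j y)
    (hδix : 0 < δi i₀ x)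
    (ε : ℝ) (hε : 0 < ε) (hεle : ε ≤ δi i₀ x)
    (hratio : (∑ j, δi j y) / v i₀ y < (∑ j, δi j x) / v i₀ x)
    (hratio' : ((∑ j, δi j y) + ε) / v i₀ y ≤ ((∑ j, δi j x) - ε) / v i₀ x) :
    potential v δi <
      potential v (fun j =>
        if j = i₀ then
          Function.update (Function.update (δi i₀) x (δi i₀ x - ε)) y (δi i₀ y + ε)
        else δi j) := by
  classical
  have hxy : x ≠ y := fun h => absurd hratio (by rw [h]; exact lt_irrefl _)
  set δ' : N → A → ℝ := fun j => if j = i₀ then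
      Function.update (Function.update (δi i₀) x (δi i₀ x - ε)) y (δi i₀ y + ε)
    else δi j with hδ'def
  have hδ'ne : ∀ j, j ≠ i₀ → δ' j = δi j := fun j hj => by simp [hδ'def, hj]
  have hδ'x : δ' i₀ x = δi i₀ x - ε := by
    simp [hδ'def, Function.update_apply, hxy]
  have hδ'y : δ' i₀ y = δi i₀ y + ε := by simp [hδ'def]
  have hδ'o : ∀ a, a ≠ x → a ≠ y → δ' i₀ a = δi i₀ a := by
    intro a hax hay
    simp [hδ'def, Function.update_apply, hax, hay]
  have hδ'all : ∀ i a, a ≠ x → a ≠ y → δ' i a = δi i a := by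
    intro i a hax hay
    by_cases h : i = i₀
    · subst h; exact hδ'o a hax hay
    · rw [hδ'ne i h]
  -- sums
  have hsum : ∀ a, ∑ j, δ' j a = (∑ j, δi j a) + (δ' i₀ a - δi i₀ a) := by
    intro a
    have h : ∀ j ∈ Finset.univ, δ' j a
        = δi j a + (if j = i₀ then δ' i₀ a - δi i₀ a else 0) := by
      intro j _
      by_cases h : j = i₀
      · subst h; simp
      · simp [hδ'ne j h, h]
    rw [Finset.sum_congr rfl h, Finset.sum_add_distrib]
    simp
  have hsx : ∑ j, δ' j x = (∑ j, δi j x) - ε := by rw [hsum, hδ'x]; ring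
  have hsy : ∑ j, δ' j y = (∑ j, δi j y) + ε := by rw [hsum, hδ'y]; ring
  have hso : ∀ a, a ≠ x → a ≠ y → ∑ j, δ' j a = ∑ j, δi j a := by
    intro a h1 h2; rw [hsum, hδ'o a h1 h2]; ring
  have hDx' : 0 < (∑ j, δi j x) - ε := by
    have h0 : 0 < ((∑ j, δi j y) + ε) / v i₀ y := by positivity
    have := lt_of_lt_of_le h0 hratio'
    exact (div_pos_iff.mp this).resolve_right (fun h => absurd h.2 (not_lt.mpr hvx.le)) |>.1
  have hzero : ∀ i a, ¬ 0 < v i a → δi i a = 0 := by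
    intro i a h
    rcases (hδi i a).lt_or_eq with h' | h'
    · exact absurd (hsupp i a h') h
    · exact h'.symm
  have hzero' : ∀ i a, ¬ 0 < v i a → δ' i a = 0 := by
    intro i a h
    by_cases hax : a = x
    · subst hax
      by_cases hi : i = i₀
      · exact absurd hvx (hi ▸ h)
      · rw [hδ'ne i hi]; exact hzero _ _ h
    · by_cases hay : a = y
      · subst hay
        by_cases hi : i = i₀
        · exact absurd hvy (hi ▸ h)
        · rw [hδ'ne i hi]; exact hzero _ _ h
      · rw [hδ'all i a hax hay]; exact hzero i a h
  -- rewrite potential into swapped form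
  have pot_eq : ∀ d : N → A → ℝ, potential v d
      = ∑ a : A, ∑ i : N, (if 0 < v i a then d i a * Real.log (v i a / ∑ j, d j a) else 0) := by
    intro d
    simp only [potential, Finset.sum_filter]
    exact Finset.sum_comm
  rw [pot_eq δi, pot_eq δ', ← sub_pos, ← Finset.sum_sub_distrib]
  set g : A → ℝ := fun a =>
    (∑ i : N, (if 0 < v i a then δ' i a * Real.log (v i a / ∑ j, δ' j a) else 0))
    - ∑ i : N, (if 0 < v i a then δi i a * Real.log (v i a / ∑ j, δi j a) else 0) with hg
  have hgzero : ∀ a ∈ Finset.univ, a ∉ ({x, y} : Finset A) → g a = 0 := by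
    intro a _ ha
    simp only [Finset.mem_insert, Finset.mem_singleton, not_or] at ha
    have e1 : ∀ i ∈ Finset.univ, (if 0 < v i a then δ' i a * Real.log (v i a / ∑ j, δ' j a) else 0)
        = (if 0 < v i a then δi i a * Real.log (v i a / ∑ j, δi j a) else 0) := by
      intro i _
      rw [hδ'all i a ha.1 ha.2, hso a ha.1 ha.2]
    rw [hg]
    simp only
    rw [Finset.sum_congr rfl e1, sub_self]
  have hsplit : ∑ a : A, g a = g x + g y := by
    rw [← Finset.sum_subset (Finset.subset_univ ({x, y} : Finset A)) hgzero,
      Finset.sum_pair hxy]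
  rw [hsplit]
  -- compute g x and g y
  have hgx : g x = -(ε * Real.log (v i₀ x))
      - ((∑ j, δi j x) - ε) * Real.log ((∑ j, δi j x) - ε)
      + (∑ j, δi j x) * Real.log (∑ j, δi j x) := by
    rw [hg]
    simp only
    rw [aux_G v δ' x (fun i => hzero' i x) (by rw [hsx]; exact hDx'),
      aux_G v δi x (fun i => hzero i x) hδx, hsx]
    have e2 : ∀ i ∈ Finset.univ, (if 0 < v i x then δ' i x * Real.log (v i x) else 0)
        = (if 0 < v i x then δi i x * Real.log (v i x) else 0)
          + (if i = i₀ then -(ε * Real.log (v i₀ x)) else 0) := by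
      intro i _
      by_cases h : i = i₀
      · subst h
        simp only [hvx, if_true, hδ'x]
        ring
      · simp [hδ'ne i h, h]
    rw [Finset.sum_congr rfl e2, Finset.sum_add_distrib]
    simp only [Finset.sum_ite_eq' Finset.univ i₀, Finset.mem_univ, if_true]
    ring
  have hgy : g y = ε * Real.log (v i₀ y)
      - ((∑ j, δi j y) + ε) * Real.log ((∑ j, δi j y) + ε)
      + (∑ j, δi j y) * Real.log (∑ j, δi j y) := by
    rw [hg]
    simp only
    rw [aux_G v δ' y (fun i => hzero' i y) (by rw [hsy]; positivity),
      aux_G v δi y (fun i => hzero i y) hδy, hsy]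
    have e2 : ∀ i ∈ Finset.univ, (if 0 < v i y then δ' i y * Real.log (v i y) else 0)
        = (if 0 < v i y then δi i y * Real.log (v i y) else 0)
          + (if i = i₀ then ε * Real.log (v i₀ y) else 0) := by
      intro i _
      by_cases h : i = i₀
      · subst h
        simp only [hvy, if_true, hδ'y]
        ring
      · simp [hδ'ne i h, h]
    rw [Finset.sum_congr rfl e2, Finset.sum_add_distrib]
    simp only [Finset.sum_ite_eq' Finset.univ i₀, Finset.mem_univ, if_true]
    ring
  rw [hgx, hgy]
  have := aux_ineq (∑ j, δi j x) (∑ j, δi j y) (v i₀ x) (v i₀ y) ε hvx hvy hδx hδy hε hDx' hratio'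
  linarith
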